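/- arXiv:1302.7128 — 3 statements merged into one kernel-verified Lean document; each statement's English description precedes it below -/
import Mathlib

section
/- For fixed t > 0 and z > 0, the function x ↦ q_x(t,x,z)/q(t,x,z) is (strictly) decreasing on (0,∞). -/
open Real Set

noncomputable def q (t x y : ℝ) : ℝ :=
  (Real.sqrt (2 * Real.pi * t))⁻¹ *
    (Real.exp (-(x - y) ^ 2 / (2 * t)) - Real.exp (-(x + y) ^ 2 / (2 * t)))

lemma q_hasDerivAt (t z x : ℝ) (ht : 0 < t) :
    HasDerivAt (fun x' => q t x' z)
      ((Real.sqrt (2 * Real.pi * t))⁻¹ *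
        (-(x - z) / t * Real.exp (-(x - z) ^ 2 / (2 * t)) +
          (x + z) / t * Real.exp (-(x + z) ^ 2 / (2 * t)))) x := by
  have htne : t ≠ 0 := ht.ne'
  have h1 : HasDerivAt (fun x' : ℝ => -(x' - z) ^ 2 / (2 * t)) (-(x - z) / t) x := by
    have h0 : HasDerivAt (fun x' : ℝ => x' - z) 1 x := (hasDerivAt_id x).sub_const z
    have h := ((h0.pow 2).neg).div_const (2 * t)
    refine h.congr_deriv ?_
    field_simp
    ring
  have h2 : HasDerivAt (fun x' : ℝ => -(x' + z) ^ 2 / (2 * t)) (-(x + z) / t) x := by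
    have h0 : HasDerivAt (fun x' : ℝ => x' + z) 1 x := (hasDerivAt_id x).add_const z
    have h := ((h0.pow 2).neg).div_const (2 * t)
    refine h.congr_deriv ?_
    field_simp
    ring
  have h := ((h1.exp).sub (h2.exp)).const_mul (Real.sqrt (2 * Real.pi * t))⁻¹
  refine h.congr_deriv ?_
  ring

theorem stmt_2 (t z : ℝ) (ht : 0 < t) (hz : 0 < z) :
    StrictAntiOn (fun x => deriv (fun x' => q t x' z) x / q t x z) (Set.Ioi (0 : ℝ)) := by
  have htne : t ≠ 0 := ht.ne'
  have hcpos : 0 < (Real.sqrt (2 * Real.pi * t))⁻¹ := by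
    have : 0 < Real.sqrt (2 * Real.pi * t) := Real.sqrt_pos.mpr (by positivity)
    exact inv_pos.mpr this
  have key : ∀ x ∈ Ioi (0 : ℝ),
      deriv (fun x' => q t x' z) x / q t x z
        = (z - x) / t + (2 * z / t) / (Real.exp (2 * x * z / t) - 1) := by
    intro x hx
    have hx0 : 0 < x := hx
    rw [(q_hasDerivAt t z x ht).deriv]
    have hv1 : 1 < Real.exp (2 * x * z / t) := by
      have h := Real.add_one_le_exp (2 * x * z / t)
      have : 0 < 2 * x * z / t := by positivity
      linarith
    have hvne : Real.exp (2 * x * z / t) ≠ 0 := (Real.exp_pos _).ne'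
    have hvm1 : Real.exp (2 * x * z / t) - 1 ≠ 0 := by linarith
    have hE1 : Real.exp (-(x - z) ^ 2 / (2 * t)) ≠ 0 := (Real.exp_pos _).ne'
    have hB : Real.exp (-(x + z) ^ 2 / (2 * t))
        = Real.exp (-(x - z) ^ 2 / (2 * t)) * (Real.exp (2 * x * z / t))⁻¹ := by
      rw [← Real.exp_neg, ← Real.exp_add]
      congr 1
      field_simp
      ring
    rw [q, hB]
    set c := (Real.sqrt (2 * Real.pi * t))⁻¹ with hc
    set E := Real.exp (-(x - z) ^ 2 / (2 * t)) with hE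
    set v := Real.exp (2 * x * z / t) with hv
    have hEpos : 0 < E := Real.exp_pos _
    have hvpos : 0 < v := Real.exp_pos _
    have hD : c * (E - E * v⁻¹) ≠ 0 := by
      have h : E - E * v⁻¹ = E * (v - 1) / v := by
        field_simp
      rw [h]
      have hp : 0 < E * (v - 1) / v := div_pos (mul_pos hEpos (by linarith)) hvpos
      exact (mul_pos hcpos hp).ne'
    rw [div_eq_iff hD]
    field_simp
    ring
  intro a ha b hb hab
  simp only
  rw [key a ha, key b hb]
  have h1 : (z - b) / t < (z - a) / t := by
    apply div_lt_div_of_pos_right (by linarith) ht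
  have ha0 : 0 < a := ha
  have hb0 : 0 < b := hb
  have hea : 1 < Real.exp (2 * a * z / t) := by
    have h := Real.add_one_le_exp (2 * a * z / t)
    have : 0 < 2 * a * z / t := div_pos (by nlinarith) ht
    linarith
  have h2 : Real.exp (2 * a * z / t) - 1 < Real.exp (2 * b * z / t) - 1 := by
    have : 2 * a * z / t < 2 * b * z / t := by
      apply div_lt_div_of_pos_right _ ht
      nlinarith
    have := Real.exp_lt_exp.mpr this
    linarith
  have h3 : (2 * z / t) / (Real.exp (2 * b * z / t) - 1)
      < (2 * z / t) / (Real.exp (2 * a * z / t) - 1) :=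
    div_lt_div_of_pos_left (by positivity) (by linarith) h2
  linarith
end

section
/- For every t > 0 and a > 0, the partial derivative of H with respect to t satisfies H_t(t,a) = -ℓ(t,a), where H(t,a) = ∫₀^∞ q(t,a,y) dy. -/
open Real Set MeasureTheory

noncomputable def ℓ (t a : ℝ) : ℝ :=
  a / Real.sqrt (2 * Real.pi * t ^ 3) * Real.exp (-a ^ 2 / (2 * t))

noncomputable def H (t a : ℝ) : ℝ := ∫ y in Set.Ioi (0 : ℝ), q t a y

open Filter Topology

noncomputable def G (s : ℝ) : ℝ := ∫ u in (0:ℝ)..s, Real.exp (-u ^ 2 / 2)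

lemma G_hasDerivAt (s : ℝ) : HasDerivAt G (Real.exp (-s ^ 2 / 2)) s := by
  have hc : Continuous fun u : ℝ => Real.exp (-u ^ 2 / 2) := by continuity
  exact intervalIntegral.integral_hasDerivAt_right
    (hc.intervalIntegrable _ _) (hc.stronglyMeasurableAtFilter _ _) hc.continuousAt

lemma G_neg (s : ℝ) : G (-s) = -G s := by
  have h := intervalIntegral.integral_comp_neg (a := (0:ℝ)) (b := s)
    (fun u => Real.exp (-u ^ 2 / 2))
  simp only [neg_sq, neg_zero] at h
  rw [G, intervalIntegral.integral_symm, ← h, ← G]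

lemma G_tendsto : ∃ L : ℝ, Filter.Tendsto G Filter.atTop (nhds L) := by
  have hi : IntegrableOn (fun u : ℝ => Real.exp (-u ^ 2 / 2)) (Set.Ioi 0) := by
    have heq : (fun u : ℝ => Real.exp (-u ^ 2 / 2))
        = fun u => Real.exp (-(2⁻¹:ℝ) * u ^ 2) := by funext u; ring_nf
    rw [heq]
    exact (integrable_exp_neg_mul_sq (by norm_num)).integrableOn
  exact ⟨_, MeasureTheory.intervalIntegral_tendsto_integral_Ioi 0 hi Filter.tendsto_id⟩

lemma q_integrable (t a : ℝ) (ht : 0 < t) :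
    IntegrableOn (fun y => q t a y) (Set.Ioi 0) := by
  have hb : (0:ℝ) < (2 * t)⁻¹ := by positivity
  have h1 : Integrable (fun y : ℝ => Real.exp (-(a - y) ^ 2 / (2 * t))) := by
    have heq : (fun y : ℝ => Real.exp (-(a - y) ^ 2 / (2 * t)))
        = fun y => Real.exp (-(2*t)⁻¹ * (y + -a) ^ 2) := by
      funext y; congr 1; field_simp; ring
    rw [heq]; exact (integrable_exp_neg_mul_sq hb).comp_add_right (-a)
  have h2 : Integrable (fun y : ℝ => Real.exp (-(a + y) ^ 2 / (2 * t))) := by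
    have heq : (fun y : ℝ => Real.exp (-(a + y) ^ 2 / (2 * t)))
        = fun y => Real.exp (-(2*t)⁻¹ * (y + a) ^ 2) := by
      funext y; congr 1; field_simp; ring
    rw [heq]; exact (integrable_exp_neg_mul_sq hb).comp_add_right a
  exact (((h1.sub h2).const_mul _).congr (Filter.Eventually.of_forall fun y => rfl)).integrableOn

lemma H_eq (t a : ℝ) (ht : 0 < t) :
    H t a = 2 * (Real.sqrt (2 * Real.pi))⁻¹ * G (a / Real.sqrt t) := by
  have hs : (0:ℝ) < Real.sqrt t := Real.sqrt_pos.2 ht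
  have hs2 : Real.sqrt t ^ 2 = t := Real.sq_sqrt ht.le
  set c : ℝ := (Real.sqrt (2 * Real.pi * t))⁻¹ with hc
  set F : ℝ → ℝ := fun y =>
    c * Real.sqrt t * (G ((y - a) / Real.sqrt t) - G ((y + a) / Real.sqrt t)) with hF
  have hderiv : ∀ y : ℝ, HasDerivAt F (q t a y) y := by
    intro y
    have hA : HasDerivAt (fun y : ℝ => (y - a) / Real.sqrt t) (1 / Real.sqrt t) y := by
      simpa using ((hasDerivAt_id y).sub_const a).div_const (Real.sqrt t)
    have hB : HasDerivAt (fun y : ℝ => (y + a) / Real.sqrt t) (1 / Real.sqrt t) y := by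
      simpa using ((hasDerivAt_id y).add_const a).div_const (Real.sqrt t)
    have h1 := (G_hasDerivAt ((y - a) / Real.sqrt t)).comp y hA
    have h2 := (G_hasDerivAt ((y + a) / Real.sqrt t)).comp y hB
    have h3 := ((h1.sub h2).const_mul (c * Real.sqrt t))
    refine h3.congr_deriv (Eq.symm ?_)
    have e1 : ((y - a) / Real.sqrt t) ^ 2 = (a - y) ^ 2 / t := by
      rw [div_pow, hs2]; ring_nf
    have e2 : ((y + a) / Real.sqrt t) ^ 2 = (a + y) ^ 2 / t := by
      rw [div_pow, hs2]; ring_nf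
    rw [q, e1, e2]
    have e3 : -((a - y) ^ 2 / t) / 2 = -(a - y) ^ 2 / (2 * t) := by ring
    have e4 : -((a + y) ^ 2 / t) / 2 = -(a + y) ^ 2 / (2 * t) := by ring
    rw [e3, e4, ← hc, mul_assoc]
    congr 1
    field_simp
  obtain ⟨L, hL⟩ := G_tendsto
  have htop1 : Tendsto (fun y : ℝ => (y - a) / Real.sqrt t) atTop atTop := by
    exact (tendsto_atTop_add_const_right atTop (-a) tendsto_id).atTop_div_const hs
  have htop2 : Tendsto (fun y : ℝ => (y + a) / Real.sqrt t) atTop atTop := by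
    exact (tendsto_atTop_add_const_right atTop a tendsto_id).atTop_div_const hs
  have hF0 : Tendsto F atTop (𝓝 0) := by
    have := ((hL.comp htop1).sub (hL.comp htop2)).const_mul (c * Real.sqrt t)
    simpa using this
  have key := integral_Ioi_of_hasDerivAt_of_tendsto' (a := 0)
    (fun x _ => hderiv x) (q_integrable t a ht) hF0
  have hF0v : F 0 = -(2 * c * Real.sqrt t * G (a / Real.sqrt t)) := by
    rw [hF]
    simp only [zero_sub, zero_add, neg_div, G_neg]
    ring
  rw [H, key, hF0v]
  have hcs : c * Real.sqrt t = (Real.sqrt (2 * Real.pi))⁻¹ := by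
    rw [hc, Real.sqrt_mul (by positivity) t]
    field_simp
  rw [zero_sub, neg_neg]
  rw [show (2:ℝ) * c * Real.sqrt t * G (a / Real.sqrt t)
      = 2 * (c * Real.sqrt t) * G (a / Real.sqrt t) by ring, hcs]

theorem stmt_7 (t a : ℝ) (ht : 0 < t) (ha : 0 < a) :
    deriv (fun t' => H t' a) t = -ℓ t a := by
  have hs : (0:ℝ) < Real.sqrt t := Real.sqrt_pos.2 ht
  have hs2 : Real.sqrt t ^ 2 = t := Real.sq_sqrt ht.le
  have heq : (fun t' => H t' a)
      =ᶠ[𝓝 t] fun t' => 2 * (Real.sqrt (2 * Real.pi))⁻¹ * G (a / Real.sqrt t') := by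
    filter_upwards [Ioi_mem_nhds ht] with t' ht'
    exact H_eq t' a ht'
  rw [heq.deriv_eq]
  have hin : HasDerivAt (fun t' : ℝ => a / Real.sqrt t')
      (a * (-(1 / (2 * Real.sqrt t)) / Real.sqrt t ^ 2)) t := by
    have h1 : HasDerivAt (fun t' : ℝ => (Real.sqrt t')⁻¹)
        (-(1 / (2 * Real.sqrt t)) / Real.sqrt t ^ 2) t :=
      (Real.hasDerivAt_sqrt ht.ne').inv hs.ne'
    simpa [div_eq_mul_inv] using h1.const_mul a
  have hG := (G_hasDerivAt (a / Real.sqrt t)).comp t hin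
  have h := hG.const_mul (2 * (Real.sqrt (2 * Real.pi))⁻¹)
  simp only [Function.comp_def] at h
  rw [h.deriv]
  have harg : (a / Real.sqrt t) ^ 2 = a ^ 2 / t := by rw [div_pow, hs2]
  rw [ℓ, harg]
  have e3 : -(a ^ 2 / t) / 2 = -a ^ 2 / (2 * t) := by ring
  rw [e3]
  have ht3 : Real.sqrt (2 * Real.pi * t ^ 3) = Real.sqrt (2 * Real.pi) * (t * Real.sqrt t) := by
    rw [Real.sqrt_mul (by positivity) (t ^ 3)]
    congr 1
    rw [show t ^ 3 = (t * Real.sqrt t) ^ 2 by rw [mul_pow, hs2]; ring]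
    exact Real.sqrt_sq (by positivity)
  rw [ht3, hs2]
  have hpi : (0:ℝ) < Real.sqrt (2 * Real.pi) := Real.sqrt_pos.2 (by positivity)
  field_simp
end

section
/- For all t > 0 and y ∈ ℝ, |q_y(t,1,y)| ≤ √(2/(πe)) · (1/t), where q_y is the partial derivative in the third argument of q(t,x,y) = (2πt)^{-1/2}(e^{-(x-y)²/(2t)} - e^{-(x+y)²/(2t)}). -/
open Real

lemma key_xe (x : ℝ) : x * Real.exp (-x) ≤ Real.exp (-1) := by
  have h : x ≤ Real.exp (x - 1) := by
    have := Real.add_one_le_exp (x - 1); linarith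
  calc x * Real.exp (-x) ≤ Real.exp (x - 1) * Real.exp (-x) :=
        mul_le_mul_of_nonneg_right h (Real.exp_nonneg _)
    _ = Real.exp (-1) := by rw [← Real.exp_add]; ring_nf

lemma abs_mul_exp_bound (t a : ℝ) (ht : 0 < t) :
    |a| * Real.exp (-a ^ 2 / (2 * t)) ≤ Real.sqrt t * Real.exp (-(1:ℝ) / 2) := by
  have hsq : (|a| * Real.exp (-a ^ 2 / (2 * t))) ^ 2 ≤ (Real.sqrt t * Real.exp (-(1:ℝ) / 2)) ^ 2 := by
    have h1 : (|a| * Real.exp (-a ^ 2 / (2 * t))) ^ 2 = a ^ 2 * Real.exp (-(a ^ 2 / t)) := by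
      rw [mul_pow, sq_abs, ← Real.exp_nat_mul]
      congr 1
      field_simp
      ring
    have h2 : (Real.sqrt t * Real.exp (-(1:ℝ) / 2)) ^ 2 = t * Real.exp (-1) := by
      rw [mul_pow, Real.sq_sqrt ht.le, ← Real.exp_nat_mul]
      norm_num
    rw [h1, h2]
    have := key_xe (a ^ 2 / t)
    calc a ^ 2 * Real.exp (-(a ^ 2 / t)) = t * (a ^ 2 / t * Real.exp (-(a ^ 2 / t))) := by
          field_simp
      _ ≤ t * Real.exp (-1) := by
          apply mul_le_mul_of_nonneg_left this ht.le
  have h3 : (0:ℝ) ≤ |a| * Real.exp (-a ^ 2 / (2 * t)) := by positivity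
  have h4 : (0:ℝ) ≤ Real.sqrt t * Real.exp (-(1:ℝ) / 2) := by positivity
  nlinarith [hsq, h3, h4]

theorem stmt_11 (t y : ℝ) (ht : 0 < t) :
    |deriv (fun y' => q t 1 y') y| ≤ Real.sqrt (2 / (Real.pi * Real.exp 1)) * (1 / t) := by
  set c : ℝ := (Real.sqrt (2 * Real.pi * t))⁻¹ with hc
  have hg1 : HasDerivAt (fun y' : ℝ => -(1 - y') ^ 2 / (2 * t)) ((1 - y) / t) y := by
    have h := (((hasDerivAt_id y).const_sub 1).pow 2).neg.div_const (2 * t)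
    refine h.congr_deriv ?_
    simp only [id]; field_simp; ring
  have hg2 : HasDerivAt (fun y' : ℝ => -(1 + y') ^ 2 / (2 * t)) (-(1 + y) / t) y := by
    have h := (((hasDerivAt_id y).const_add 1).pow 2).neg.div_const (2 * t)
    refine h.congr_deriv ?_
    simp only [id]; field_simp; ring
  have hd : HasDerivAt (fun y' => q t 1 y')
      (c * ((1 - y) / t * Real.exp (-(1 - y) ^ 2 / (2 * t)) +
            (1 + y) / t * Real.exp (-(1 + y) ^ 2 / (2 * t)))) y := by
    have h := ((hg1.exp).sub (hg2.exp)).const_mul c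
    refine h.congr_deriv ?_
    ring
  rw [hd.deriv]
  have hb1 := abs_mul_exp_bound t (1 - y) ht
  have hb2 := abs_mul_exp_bound t (1 + y) ht
  have hcpos : 0 < Real.sqrt (2 * Real.pi * t) := Real.sqrt_pos.mpr (by positivity)
  have hc0 : 0 < c := by rw [hc]; positivity
  have heq : c * (2 * (Real.sqrt t * Real.exp (-(1:ℝ) / 2))) * (1 / t)
      = Real.sqrt (2 / (Real.pi * Real.exp 1)) * (1 / t) := by
    congr 1
    have hL : 0 ≤ c * (2 * (Real.sqrt t * Real.exp (-(1:ℝ) / 2))) := by positivity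
    rw [← Real.sqrt_sq hL]
    congr 1
    have h1 : (c * (2 * (Real.sqrt t * Real.exp (-(1:ℝ) / 2)))) ^ 2
        = (Real.sqrt (2 * Real.pi * t))⁻¹ ^ 2 * 4 * Real.sqrt t ^ 2 * Real.exp (-(1:ℝ)/2) ^ 2 := by
      rw [hc]; ring
    rw [h1, inv_pow, Real.sq_sqrt (by positivity : (0:ℝ) ≤ 2 * Real.pi * t),
        Real.sq_sqrt ht.le, ← Real.exp_nat_mul]
    have he : Real.exp ((2:ℕ) * (-(1:ℝ)/2)) = (Real.exp 1)⁻¹ := by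
      rw [← Real.exp_neg]; norm_num
    rw [he]
    have hpi := Real.pi_pos
    have hexp := Real.exp_pos 1
    field_simp
    ring
  rw [← heq]
  calc |c * ((1 - y) / t * Real.exp (-(1 - y) ^ 2 / (2 * t)) +
            (1 + y) / t * Real.exp (-(1 + y) ^ 2 / (2 * t)))|
      = c * |(1 - y) / t * Real.exp (-(1 - y) ^ 2 / (2 * t)) +
            (1 + y) / t * Real.exp (-(1 + y) ^ 2 / (2 * t))| := by
        rw [abs_mul, abs_of_pos hc0]
    _ ≤ c * (|(1 - y) / t * Real.exp (-(1 - y) ^ 2 / (2 * t))| +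
            |(1 + y) / t * Real.exp (-(1 + y) ^ 2 / (2 * t))|) := by
        apply mul_le_mul_of_nonneg_left (abs_add_le _ _) hc0.le
    _ ≤ c * (Real.sqrt t * Real.exp (-(1:ℝ) / 2) / t + Real.sqrt t * Real.exp (-(1:ℝ) / 2) / t) := by
        apply mul_le_mul_of_nonneg_left _ hc0.le
        apply add_le_add
        · rw [abs_mul, abs_div, abs_of_pos ht, abs_of_pos (Real.exp_pos _)]
          calc |1 - y| / t * Real.exp (-(1 - y) ^ 2 / (2 * t))
              = (|1 - y| * Real.exp (-(1 - y) ^ 2 / (2 * t))) / t := by ring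
            _ ≤ Real.sqrt t * Real.exp (-(1:ℝ)/2) / t := by
                exact div_le_div_of_nonneg_right hb1 ht.le |>.trans_eq rfl
        · rw [abs_mul, abs_div, abs_of_pos ht, abs_of_pos (Real.exp_pos _)]
          calc |1 + y| / t * Real.exp (-(1 + y) ^ 2 / (2 * t))
              = (|1 + y| * Real.exp (-(1 + y) ^ 2 / (2 * t))) / t := by ring
            _ ≤ Real.sqrt t * Real.exp (-(1:ℝ)/2) / t := by
                exact div_le_div_of_nonneg_right hb2 ht.le |>.trans_eq rfl
    _ = c * (2 * (Real.sqrt t * Real.exp (-(1:ℝ) / 2))) * (1 / t) := by ring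
end
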